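/- Let s ≥ 1 and σ > 1/2. Suppose (u_k)_{k≥0} and (f_k)_{k≥0} are square-summable sequences of reals satisfying π^s(k^s − σ^s)·u_k = f_k for all k ≠ k₀, where k₀ is the nearest integer to σ. Then there is a constant C depending only on s such that Σ_{k≠k₀} u_k² ≤ C·σ^{2−2s}·Σ_k f_k². -/

import Mathlib

open Real

/-- The nearest integer to `σ`, choosing the smaller one at half-integers. -/
noncomputable def nearestInt (σ : ℝ) : ℤ := ⌈σ - 1 / 2⌉

lemma half_le_dist {σ : ℝ} (k : ℕ) (h : (k : ℤ) ≠ nearestInt σ) :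
    1 / 2 ≤ |(k : ℝ) - σ| := by
  unfold nearestInt at h
  have h1 : (⌈σ - 1/2⌉ : ℝ) < (σ - 1/2) + 1 := Int.ceil_lt_add_one _
  have h2 : σ - 1/2 ≤ (⌈σ - 1/2⌉ : ℝ) := Int.le_ceil _
  rcases lt_or_gt_of_ne h with hlt | hgt
  · have hk : (k : ℤ) ≤ ⌈σ - 1/2⌉ - 1 := by omega
    have hk' : (k : ℝ) ≤ (⌈σ - 1/2⌉ : ℝ) - 1 := by exact_mod_cast hk
    rw [le_abs]
    right; linarith
  · have hk : (⌈σ - 1/2⌉ : ℤ) + 1 ≤ (k : ℤ) := by omega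
    have hk' : (⌈σ - 1/2⌉ : ℝ) + 1 ≤ (k : ℝ) := by exact_mod_cast hk
    rw [le_abs]
    left; linarith

lemma sub_rpow_aux {s a b : ℝ} (hs : 1 ≤ s) (hb : 0 ≤ b) (hab : b ≤ a) :
    a ^ (s - 1) * (a - b) ≤ a ^ s - b ^ s := by
  have ha : 0 ≤ a := hb.trans hab
  rcases eq_or_lt_of_le ha with h0 | h0
  · have hb0 : b = 0 := le_antisymm (hab.trans h0.ge) hb
    subst hb0
    have ha0 : a = 0 := le_antisymm h0.ge ha
    subst ha0
    simp [Real.zero_rpow (show s ≠ 0 by linarith)]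
  · have h1 : b ^ s ≤ a ^ (s - 1) * b := by
      rcases eq_or_lt_of_le hb with hb0 | hb0
      · rw [← hb0, Real.zero_rpow (show s ≠ 0 by linarith)]
        positivity
      · have : b ^ s = b ^ (s - 1) * b := by
          rw [← Real.rpow_add_one hb0.ne' (s - 1)]; ring_nf
        rw [this]
        exact mul_le_mul_of_nonneg_right
          (Real.rpow_le_rpow hb hab (by linarith)) hb
    have h2 : a ^ s = a ^ (s - 1) * a := by
      rw [← Real.rpow_add_one h0.ne' (s - 1)]; ring_nf
    nlinarith [h1, h2]

lemma key_lower {s σ : ℝ} (hs : 1 ≤ s) (hσ : 1 / 2 < σ) (k : ℕ)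
    (h : (k : ℤ) ≠ nearestInt σ) :
    σ ^ (s - 1) / 2 ≤ |(k : ℝ) ^ s - σ ^ s| := by
  have hσ0 : (0 : ℝ) < σ := by linarith
  have hd := half_le_dist k h
  have hk0 : (0 : ℝ) ≤ (k : ℝ) := Nat.cast_nonneg k
  have key : σ ^ (s - 1) * |(k : ℝ) - σ| ≤ |(k : ℝ) ^ s - σ ^ s| := by
    rcases le_or_gt σ (k : ℝ) with hle | hlt
    · have h1 : (k : ℝ) ^ (s - 1) * ((k : ℝ) - σ) ≤ (k : ℝ) ^ s - σ ^ s :=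
        sub_rpow_aux hs hσ0.le hle
      have h2 : σ ^ (s - 1) ≤ (k : ℝ) ^ (s - 1) :=
        Real.rpow_le_rpow hσ0.le hle (by linarith)
      have h3 : σ ^ (s - 1) * ((k : ℝ) - σ) ≤ (k : ℝ) ^ (s - 1) * ((k : ℝ) - σ) :=
        mul_le_mul_of_nonneg_right h2 (by linarith)
      have h4 : σ ^ s ≤ (k : ℝ) ^ s := Real.rpow_le_rpow hσ0.le hle (by linarith)
      rw [abs_of_nonneg (by linarith : (0:ℝ) ≤ (k:ℝ) - σ),
        abs_of_nonneg (by linarith : (0:ℝ) ≤ (k:ℝ)^s - σ^s)]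
      linarith
    · have h1 : σ ^ (s - 1) * (σ - (k : ℝ)) ≤ σ ^ s - (k : ℝ) ^ s :=
        sub_rpow_aux hs hk0 hlt.le
      have h4 : (k : ℝ) ^ s < σ ^ s := Real.rpow_lt_rpow hk0 hlt (by linarith)
      rw [abs_of_neg (by linarith : (k:ℝ) - σ < 0),
        abs_of_neg (by linarith : (k:ℝ)^s - σ^s < 0)]
      linarith
  calc σ ^ (s - 1) / 2 = σ ^ (s - 1) * (1/2) := by ring
    _ ≤ σ ^ (s - 1) * |(k : ℝ) - σ| := by
        apply mul_le_mul_of_nonneg_left (by linarith) (Real.rpow_nonneg hσ0.le _)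
    _ ≤ _ := key

theorem stmt7 (s : ℝ) (hs : 1 ≤ s) :
    ∃ C : ℝ, 0 < C ∧ ∀ (σ : ℝ), 1 / 2 < σ → ∀ u f : ℕ → ℝ,
      Summable (fun k => (u k) ^ 2) → Summable (fun k => (f k) ^ 2) →
      (∀ k : ℕ, (k : ℤ) ≠ nearestInt σ →
        π ^ s * ((k : ℝ) ^ s - σ ^ s) * u k = f k) →
      (∑' k : {k : ℕ // (k : ℤ) ≠ nearestInt σ}, (u k) ^ 2) ≤
        C * σ ^ (2 - 2 * s) * ∑' k : ℕ, (f k) ^ 2 := by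
  have hπ : (0 : ℝ) < π ^ s := Real.rpow_pos_of_pos Real.pi_pos s
  refine ⟨4 / (π ^ s) ^ 2, by positivity, ?_⟩
  intro σ hσ u f hu hf heq
  have hσ0 : (0 : ℝ) < σ := by linarith
  set C : ℝ := 4 / (π ^ s) ^ 2 with hC
  have hCσ : 0 ≤ C * σ ^ (2 - 2 * s) := by positivity
  -- pointwise bound
  have hpt : ∀ k : ℕ, (k : ℤ) ≠ nearestInt σ →
      (u k) ^ 2 ≤ C * σ ^ (2 - 2 * s) * (f k) ^ 2 := by
    intro k hk
    set A : ℝ := σ ^ (s - 1) with hA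
    have hA0 : 0 < A := Real.rpow_pos_of_pos hσ0 _
    have hD : A / 2 ≤ |(k : ℝ) ^ s - σ ^ s| := key_lower hs hσ k hk
    have hD2 : (A / 2) ^ 2 ≤ ((k : ℝ) ^ s - σ ^ s) ^ 2 := by
      rw [← sq_abs ((k : ℝ) ^ s - σ ^ s)]
      exact pow_le_pow_left₀ (by positivity) hD 2
    have hf2 : (f k) ^ 2 = (π ^ s) ^ 2 * ((k : ℝ) ^ s - σ ^ s) ^ 2 * (u k) ^ 2 := by
      rw [← heq k hk]; ring
    have hmain : (u k) ^ 2 * ((π ^ s) ^ 2 * A ^ 2) ≤ 4 * (f k) ^ 2 := by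
      nlinarith [mul_le_mul_of_nonneg_left hD2
        (show (0:ℝ) ≤ (π ^ s) ^ 2 * (u k) ^ 2 by positivity), hf2]
    have hpos : (0 : ℝ) < (π ^ s) ^ 2 * A ^ 2 := by positivity
    have h4 : (u k) ^ 2 ≤ 4 * (f k) ^ 2 / ((π ^ s) ^ 2 * A ^ 2) :=
      (le_div_iff₀ hpos).mpr hmain
    have hexp : σ ^ (2 - 2 * s) * (A * A) = 1 := by
      rw [hA, ← Real.rpow_add hσ0, ← Real.rpow_add hσ0,
        show 2 - 2 * s + (s - 1 + (s - 1)) = 0 by ring, Real.rpow_zero]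
    calc (u k) ^ 2 ≤ 4 * (f k) ^ 2 / ((π ^ s) ^ 2 * A ^ 2) := h4
      _ = C * σ ^ (2 - 2 * s) * (f k) ^ 2 := by
          have hinv : σ ^ (2 - 2 * s) = (A * A)⁻¹ := eq_inv_of_mul_eq_one_left hexp
          rw [hC, hinv]
          have h1 : (π ^ s) ≠ 0 := hπ.ne'
          have h2 : A ≠ 0 := hA0.ne'
          field_simp
  have hsub : Summable (fun k : {k : ℕ // (k : ℤ) ≠ nearestInt σ} => (u k) ^ 2) :=
    hu.subtype _
  have hfsub : Summable (fun k : {k : ℕ // (k : ℤ) ≠ nearestInt σ} => (f k) ^ 2) :=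
    hf.subtype _
  calc (∑' k : {k : ℕ // (k : ℤ) ≠ nearestInt σ}, (u k) ^ 2)
      ≤ ∑' k : {k : ℕ // (k : ℤ) ≠ nearestInt σ}, C * σ ^ (2 - 2 * s) * (f k) ^ 2 :=
        hsub.tsum_le_tsum (fun k => hpt k k.2) (hfsub.mul_left _)
    _ = C * σ ^ (2 - 2 * s) * ∑' k : {k : ℕ // (k : ℤ) ≠ nearestInt σ}, (f k) ^ 2 :=
        tsum_mul_left
    _ ≤ C * σ ^ (2 - 2 * s) * ∑' k : ℕ, (f k) ^ 2 := by
        apply mul_le_mul_of_nonneg_left _ hCσ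
        exact hfsub.tsum_le_tsum_of_inj Subtype.val Subtype.val_injective
          (fun c _ => sq_nonneg _) (fun i => le_rfl) hf
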